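/- Let T > 0 and let μ : [0, T] → ℝ be continuously differentiable with μ(T) = 0. Then r²·[ (∫_0^T μ(s)·sin(r·(T - s)) ds)² + (∫_0^T μ(s)·cos(r·(T - s)) ds)² ] → μ(0)² as r → +∞. -/

import Mathlib

set_option maxHeartbeats 1000000

open Real Filter MeasureTheory intervalIntegral

/-- Riemann-Lebesgue, complex form, on an interval. -/
lemma rl_exp (T : ℝ) (hT : 0 ≤ T) (h : ℝ → ℝ) (_hc : ContinuousOn h (Set.Icc 0 T)) :
    Tendsto (fun r : ℝ => ∫ s in (0:ℝ)..T, (h s : ℂ) * Complex.exp (-(r * s) * Complex.I))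
      atTop (nhds 0) := by
  set F : ℝ → ℂ := Set.indicator (Set.Ioc 0 T) (fun s => (h s : ℂ)) with hF
  have key : ∀ r : ℝ,
      FourierTransform.fourier F (r / (2 * π)) = ∫ s in (0:ℝ)..T, (h s : ℂ) * Complex.exp (-(r * s) * Complex.I) := by
    intro r
    rw [Real.fourier_real_eq_integral_exp_smul]
    have : (fun v : ℝ => Complex.exp (↑(-2 * π * v * (r / (2 * π))) * Complex.I) • F v)
        = Set.indicator (Set.Ioc 0 T)
            (fun v => (h v : ℂ) * Complex.exp (-(r * v) * Complex.I)) := by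
      funext v
      by_cases hv : v ∈ Set.Ioc 0 T
      · rw [hF, Set.indicator_of_mem hv, Set.indicator_of_mem hv]
        have : -2 * π * v * (r / (2 * π)) = -(r * v) := by
          field_simp
        rw [this, smul_eq_mul, mul_comm]
        congr 1
        push_cast
        ring
      · rw [hF, Set.indicator_of_notMem hv, Set.indicator_of_notMem hv, smul_zero]
    rw [this, MeasureTheory.integral_indicator measurableSet_Ioc,
      intervalIntegral.integral_of_le hT]
  have h1 : Tendsto (fun r : ℝ => r / (2 * π)) atTop atTop :=
    tendsto_id.atTop_div_const Real.two_pi_pos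
  have h2 : Tendsto (fun r : ℝ => r / (2 * π)) atTop (cocompact ℝ) :=
    h1.mono_right (by rw [cocompact_eq_atBot_atTop]; exact le_sup_right)
  have h3 := (Real.zero_at_infty_fourier F).comp h2
  refine h3.congr fun r => key r

lemma rl_cos (T : ℝ) (hT : 0 ≤ T) (h : ℝ → ℝ) (hc : ContinuousOn h (Set.Icc 0 T)) :
    Tendsto (fun r : ℝ => ∫ s in (0:ℝ)..T, h s * Real.cos (r * s)) atTop (nhds 0) := by
  have h0 := rl_exp T hT h hc
  have h1 := (Complex.continuous_re.tendsto 0).comp h0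
  refine h1.congr fun r => ?_
  have hint : IntervalIntegrable (fun s => (h s : ℂ) * Complex.exp (-(r * s) * Complex.I))
      volume 0 T := by
    apply ContinuousOn.intervalIntegrable
    rw [Set.uIcc_of_le hT]
    exact (Complex.continuous_ofReal.comp_continuousOn hc).mul
      (Continuous.continuousOn (Complex.continuous_exp.comp
        (((continuous_const.mul Complex.continuous_ofReal).neg).mul continuous_const)))
  have := (Complex.reCLM.intervalIntegral_comp_comm hint).symm
  simp only [Complex.reCLM_apply] at this
  rw [Function.comp_apply, this]
  apply intervalIntegral.integral_congr
  intro s _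
  show ((h s : ℂ) * Complex.exp (-(r * s) * Complex.I)).re = h s * Real.cos (r * s)
  have he : Complex.exp (-(r * s) * Complex.I)
      = Complex.exp (((-(r * s) : ℝ) : ℂ) * Complex.I) := by
    congr 1
    push_cast
    ring
  rw [he]
  simp only [Complex.mul_re, Complex.ofReal_re, Complex.ofReal_im,
    Complex.exp_ofReal_mul_I_re, Complex.exp_ofReal_mul_I_im, Real.cos_neg, Real.sin_neg,
    zero_mul, mul_neg, sub_zero, neg_zero]

lemma rl_sin (T : ℝ) (hT : 0 ≤ T) (h : ℝ → ℝ) (hc : ContinuousOn h (Set.Icc 0 T)) :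
    Tendsto (fun r : ℝ => ∫ s in (0:ℝ)..T, h s * Real.sin (r * s)) atTop (nhds 0) := by
  have h0 := rl_exp T hT h hc
  have h1 := (Complex.continuous_im.tendsto 0).comp h0
  have h2 : Tendsto (fun r : ℝ => -(∫ s in (0:ℝ)..T,
      (h s : ℂ) * Complex.exp (-(r * s) * Complex.I)).im) atTop (nhds 0) := by
    simpa using h1.neg
  refine h2.congr fun r => ?_
  have hint : IntervalIntegrable (fun s => (h s : ℂ) * Complex.exp (-(r * s) * Complex.I))
      volume 0 T := by
    apply ContinuousOn.intervalIntegrable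
    rw [Set.uIcc_of_le hT]
    exact (Complex.continuous_ofReal.comp_continuousOn hc).mul
      (Continuous.continuousOn (Complex.continuous_exp.comp
        (((continuous_const.mul Complex.continuous_ofReal).neg).mul continuous_const)))
  have := (Complex.imCLM.intervalIntegral_comp_comm hint).symm
  simp only [Complex.imCLM_apply] at this
  rw [this, ← intervalIntegral.integral_neg]
  apply intervalIntegral.integral_congr
  intro s _
  show -(((h s : ℂ) * Complex.exp (-(r * s) * Complex.I)).im) = h s * Real.sin (r * s)
  have he : Complex.exp (-(r * s) * Complex.I)
      = Complex.exp (((-(r * s) : ℝ) : ℂ) * Complex.I) := by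
    congr 1
    push_cast
    ring
  rw [he]
  simp only [Complex.mul_im, Complex.ofReal_re, Complex.ofReal_im,
    Complex.exp_ofReal_mul_I_re, Complex.exp_ofReal_mul_I_im, Real.cos_neg, Real.sin_neg,
    zero_mul, mul_neg, add_zero, neg_neg]

theorem Jn_limit
    (T : ℝ) (hT : 0 < T) (μ : ℝ → ℝ)
    (hμ : ContDiffOn ℝ 1 μ (Set.Icc 0 T)) (hμT : μ T = 0) :
    Tendsto (fun r : ℝ =>
        r ^ 2 * ((∫ s in (0:ℝ)..T, μ s * Real.sin (r * (T - s))) ^ 2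
               + (∫ s in (0:ℝ)..T, μ s * Real.cos (r * (T - s))) ^ 2))
      atTop (nhds (μ 0 ^ 2)) := by
  have huIcc : Set.uIcc (0:ℝ) T = Set.Icc 0 T := Set.uIcc_of_le hT.le
  set g : ℝ → ℝ := derivWithin μ (Set.Icc 0 T) with hg
  have hgc : ContinuousOn g (Set.Icc 0 T) :=
    hμ.continuousOn_derivWithin (uniqueDiffOn_Icc hT) le_rfl
  have hμd : ∀ x ∈ Set.Icc (0:ℝ) T, HasDerivWithinAt μ (g x) (Set.Icc 0 T) x := by
    intro x hx
    exact ((hμ.differentiableOn one_ne_zero x hx).hasDerivWithinAt)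
  -- remainder integrals
  set C : ℝ → ℝ := fun r => ∫ s in (0:ℝ)..T, g s * Real.cos (r * (T - s)) with hC
  set S : ℝ → ℝ := fun r => ∫ s in (0:ℝ)..T, g s * Real.sin (r * (T - s)) with hS
  have hgint : IntervalIntegrable g volume 0 T := by
    apply ContinuousOn.intervalIntegrable; rwa [huIcc]
  -- IBP identities for r ≠ 0
  have hA : ∀ r : ℝ, r ≠ 0 →
      (∫ s in (0:ℝ)..T, μ s * Real.sin (r * (T - s)))
        = (-(μ 0 * Real.cos (r * T)) - C r) / r := by
    intro r hr
    have hv : ∀ x ∈ Set.uIcc (0:ℝ) T,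
        HasDerivWithinAt (fun s => Real.cos (r * (T - s)) / r)
          (Real.sin (r * (T - x))) (Set.uIcc (0:ℝ) T) x := by
      intro x _
      have h1 : HasDerivAt (fun s : ℝ => r * (T - s)) (-r) x := by
        simpa using ((hasDerivAt_id x).const_sub T).const_mul r
      have h2 := (h1.cos).div_const r
      have : -Real.sin (r * (T - x)) * -r / r = Real.sin (r * (T - x)) := by
        field_simp
      rw [this] at h2
      exact h2.hasDerivWithinAt
    have hu : ∀ x ∈ Set.uIcc (0:ℝ) T,
        HasDerivWithinAt μ (g x) (Set.uIcc (0:ℝ) T) x := by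
      rw [huIcc]; exact hμd
    have hv' : IntervalIntegrable (fun s => Real.sin (r * (T - s))) volume 0 T :=
      (Continuous.continuousOn (Real.continuous_sin.comp
        (continuous_const.mul (continuous_const.sub continuous_id)))).intervalIntegrable
    have := intervalIntegral.integral_mul_deriv_eq_deriv_mul_of_hasDerivWithinAt
      hu hv hgint hv'
    rw [hμT] at this
    simp only [sub_self, mul_zero, Real.cos_zero, zero_mul, sub_zero, zero_sub] at this
    rw [this]
    have : ∀ x, g x * (Real.cos (r * (T - x)) / r) = g x * Real.cos (r * (T - x)) / r := by
      intro x; ring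
    simp_rw [this, intervalIntegral.integral_div]
    rw [hC]
    field_simp
  have hB : ∀ r : ℝ, r ≠ 0 →
      (∫ s in (0:ℝ)..T, μ s * Real.cos (r * (T - s)))
        = (μ 0 * Real.sin (r * T) + S r) / r := by
    intro r hr
    have hv : ∀ x ∈ Set.uIcc (0:ℝ) T,
        HasDerivWithinAt (fun s => -(Real.sin (r * (T - s)) / r))
          (Real.cos (r * (T - x))) (Set.uIcc (0:ℝ) T) x := by
      intro x _
      have h1 : HasDerivAt (fun s : ℝ => r * (T - s)) (-r) x := by
        simpa using ((hasDerivAt_id x).const_sub T).const_mul r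
      have h2 := ((h1.sin).div_const r).neg
      have : -(Real.cos (r * (T - x)) * -r / r) = Real.cos (r * (T - x)) := by
        field_simp
      rw [this] at h2
      exact h2.hasDerivWithinAt
    have hu : ∀ x ∈ Set.uIcc (0:ℝ) T,
        HasDerivWithinAt μ (g x) (Set.uIcc (0:ℝ) T) x := by
      rw [huIcc]; exact hμd
    have hv' : IntervalIntegrable (fun s => Real.cos (r * (T - s))) volume 0 T :=
      (Continuous.continuousOn (Real.continuous_cos.comp
        (continuous_const.mul (continuous_const.sub continuous_id)))).intervalIntegrable
    have := intervalIntegral.integral_mul_deriv_eq_deriv_mul_of_hasDerivWithinAt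
      hu hv hgint hv'
    rw [hμT] at this
    simp only [sub_self, mul_zero, Real.sin_zero, zero_mul, zero_div, neg_zero,
      sub_zero, zero_sub, zero_mul] at this
    rw [this]
    have : ∀ x, g x * -(Real.sin (r * (T - x)) / r) = -(g x * Real.sin (r * (T - x))) / r := by
      intro x; ring
    simp_rw [this, intervalIntegral.integral_div, intervalIntegral.integral_neg]
    rw [hS]
    field_simp
    ring
  -- Riemann-Lebesgue for C and S
  have hmap : Set.MapsTo (fun u : ℝ => T - u) (Set.Icc 0 T) (Set.Icc 0 T) := by
    intro u hu
    simp only [Set.mem_Icc] at hu ⊢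
    constructor <;> linarith [hu.1, hu.2]
  have hh : ContinuousOn (fun u => g (T - u)) (Set.Icc 0 T) :=
    hgc.comp ((continuous_const.sub continuous_id).continuousOn) hmap
  have hCeq : ∀ r : ℝ, C r = ∫ u in (0:ℝ)..T, g (T - u) * Real.cos (r * u) := by
    intro r
    rw [hC]
    have := intervalIntegral.integral_comp_sub_left
      (a := (0:ℝ)) (b := T) (fun u => g (T - u) * Real.cos (r * u)) T
    simp only [sub_self, sub_zero] at this
    rw [← this]
    apply intervalIntegral.integral_congr
    intro s _
    simp only [sub_sub_cancel]
  have hSeq : ∀ r : ℝ, S r = ∫ u in (0:ℝ)..T, g (T - u) * Real.sin (r * u) := by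
    intro r
    rw [hS]
    have := intervalIntegral.integral_comp_sub_left
      (a := (0:ℝ)) (b := T) (fun u => g (T - u) * Real.sin (r * u)) T
    simp only [sub_self, sub_zero] at this
    rw [← this]
    apply intervalIntegral.integral_congr
    intro s _
    simp only [sub_sub_cancel]
  have hCt : Tendsto C atTop (nhds 0) := by
    have := rl_cos T hT.le (fun u => g (T - u)) hh
    exact this.congr fun r => (hCeq r).symm
  have hSt : Tendsto S atTop (nhds 0) := by
    have := rl_sin T hT.le (fun u => g (T - u)) hh
    exact this.congr fun r => (hSeq r).symm
  -- limit of the expanded expression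
  have hbdd1 : Tendsto (fun r => 2 * μ 0 * Real.cos (r * T) * C r) atTop (nhds 0) := by
    apply squeeze_zero_norm (a := fun r => |2 * μ 0| * |C r|)
    · intro r
      simp only [Real.norm_eq_abs, abs_mul]
      have h1 : |Real.cos (r * T)| ≤ 1 := Real.abs_cos_le_one _
      have h2 : (0:ℝ) ≤ |C r| := abs_nonneg _
      have h3 : (0:ℝ) ≤ |2| * |μ 0| := by positivity
      nlinarith [mul_le_mul_of_nonneg_right (mul_le_mul_of_nonneg_left h1 h3) h2]
    · have := hCt.abs
      simpa using this.const_mul (|2 * μ 0|)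
  have hbdd2 : Tendsto (fun r => 2 * μ 0 * Real.sin (r * T) * S r) atTop (nhds 0) := by
    apply squeeze_zero_norm (a := fun r => |2 * μ 0| * |S r|)
    · intro r
      simp only [Real.norm_eq_abs, abs_mul]
      have h1 : |Real.sin (r * T)| ≤ 1 := Real.abs_sin_le_one _
      have h2 : (0:ℝ) ≤ |S r| := abs_nonneg _
      have h3 : (0:ℝ) ≤ |2| * |μ 0| := by positivity
      nlinarith [mul_le_mul_of_nonneg_right (mul_le_mul_of_nonneg_left h1 h3) h2]
    · have := hSt.abs
      simpa using this.const_mul (|2 * μ 0|)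
  have hGt : Tendsto (fun r => μ 0 ^ 2 + 2 * μ 0 * Real.cos (r * T) * C r
      + 2 * μ 0 * Real.sin (r * T) * S r + C r ^ 2 + S r ^ 2) atTop (nhds (μ 0 ^ 2)) := by
    have h4 : Tendsto (fun r => C r ^ 2) atTop (nhds 0) := by
      simpa using hCt.pow 2
    have h5 : Tendsto (fun r => S r ^ 2) atTop (nhds 0) := by
      simpa using hSt.pow 2
    have := (((tendsto_const_nhds (x := μ 0 ^ 2) (f := atTop)).add hbdd1).add hbdd2).add h4
      |>.add h5
    simpa using this
  refine hGt.congr' ?_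
  filter_upwards [eventually_ge_atTop (1:ℝ)] with r hr
  have hr0 : r ≠ 0 := by linarith
  rw [hA r hr0, hB r hr0]
  have hcs : Real.cos (r * T) ^ 2 + Real.sin (r * T) ^ 2 = 1 :=
    Real.cos_sq_add_sin_sq _
  field_simp
  ring_nf
  nlinarith [hcs, sq_nonneg (C r), sq_nonneg (S r)]
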